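/- For every d ∈ ℕ and every θ ≥ 0 there exist matrices W₁ ∈ ℝ^{(8d+8)×(2d+2)}, W₂ ∈ ℝ^{(2d+2)×(8d+8)} and a vector b ∈ ℝ^{8d+8} such that for every h ∈ ℝ^{2d+2}, h + W₂·ReLU(W₁ h + b) = (h_1, …, h_{d+1}, [S_θ(h_{d+2:2d+1})]_1, …, [S_θ(h_{d+2:2d+1})]_d, h_{2d+2}); that is, a single ReLU MLP layer applies the soft-thresholding operator to coordinates d+2 through 2d+1 while leaving all other coordinates unchanged. -/

import Mathlib

open Matrix

/-- ReLU. -/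
noncomputable def relu (t : ℝ) : ℝ := max t 0

lemma sum_ind {n : ℕ} (c : ℕ) (hc : c < n) (a : ℝ) (v : Fin n → ℝ) :
    ∑ j : Fin n, (if (j : ℕ) = c then a else 0) * v j = a * v ⟨c, hc⟩ := by
  rw [Fintype.sum_eq_single (⟨c, hc⟩ : Fin n)]
  · simp
  · intro x hx
    have : (x : ℕ) ≠ c := fun hxc => hx (Fin.ext hxc)
    simp [this]

lemma soft_key (θ t : ℝ) (hθ : 0 ≤ θ) :
    t + (relu (t - θ) - relu (-t - θ) - relu t + relu (-t)) =
      Real.sign t * max 0 (|t| - θ) := by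
  unfold relu
  rcases lt_trichotomy t 0 with h | h | h
  · rw [Real.sign_of_neg h, abs_of_neg h,
      max_eq_right (show t - θ ≤ 0 by linarith),
      max_eq_right h.le, max_eq_left (show (0:ℝ) ≤ -t by linarith),
      max_comm (-t - θ) 0]
    ring
  · subst h
    simp [Real.sign_zero, max_eq_right (show -θ ≤ 0 by linarith)]
  · rw [Real.sign_of_pos h, abs_of_pos h,
      max_eq_right (show -t - θ ≤ 0 by linarith),
      max_eq_left h.le, max_eq_right (show -t ≤ 0 by linarith),
      max_comm (t - θ) 0]
    ring

/-- for every d and every θ ≥ 0 there are W₁ ∈ ℝ^{(8d+8)×(2d+2)},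
W₂ ∈ ℝ^{(2d+2)×(8d+8)} and b ∈ ℝ^{8d+8} such that the ReLU MLP layer
h ↦ h + W₂·ReLU(W₁h + b) applies the soft-thresholding operator
S_θ(t) = sign(t)·max(0,|t| − θ) to coordinates d+2,…,2d+1 (1-based) while leaving all
other coordinates unchanged. -/
theorem stmt_2 (d : ℕ) (θ : ℝ) (hθ : 0 ≤ θ) :
    ∃ (W₁ : Matrix (Fin (8 * d + 8)) (Fin (2 * d + 2)) ℝ)
      (W₂ : Matrix (Fin (2 * d + 2)) (Fin (8 * d + 8)) ℝ)
      (b : Fin (8 * d + 8) → ℝ),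
      ∀ (h : Fin (2 * d + 2) → ℝ) (i : Fin (2 * d + 2)),
        (h + W₂ *ᵥ fun t => relu ((W₁ *ᵥ h + b) t)) i =
          if d + 1 ≤ (i : ℕ) ∧ (i : ℕ) < 2 * d + 1 then
            Real.sign (h i) * max 0 (|h i| - θ)
          else h i := by
  classical
  refine ⟨
    (fun j i =>
      if (j : ℕ) < d then (if (i : ℕ) = d + 1 + (j : ℕ) then 1 else 0)
      else if (j : ℕ) < 2 * d then (if (i : ℕ) = d + 1 + ((j : ℕ) - d) then -1 else 0)
      else if (j : ℕ) < 3 * d then (if (i : ℕ) = d + 1 + ((j : ℕ) - 2 * d) then 1 else 0)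
      else if (j : ℕ) < 4 * d then (if (i : ℕ) = d + 1 + ((j : ℕ) - 3 * d) then -1 else 0)
      else 0),
    (fun i j =>
      if d + 1 ≤ (i : ℕ) ∧ (i : ℕ) < 2 * d + 1 then
        (if (j : ℕ) = (i : ℕ) - (d + 1) then 1 else 0)
        + (if (j : ℕ) = d + ((i : ℕ) - (d + 1)) then -1 else 0)
        + (if (j : ℕ) = 2 * d + ((i : ℕ) - (d + 1)) then -1 else 0)
        + (if (j : ℕ) = 3 * d + ((i : ℕ) - (d + 1)) then 1 else 0)
      else 0),
    (fun j => if (j : ℕ) < 2 * d then -θ else 0), ?_⟩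
  intro h i
  simp only [Pi.add_apply, mulVec, dotProduct]
  by_cases hcond : d + 1 ≤ (i : ℕ) ∧ (i : ℕ) < 2 * d + 1
  · rw [if_pos hcond]
    set m := (i : ℕ) - (d + 1) with hm
    have hmd : m < d := by omega
    have hiv : (i : ℕ) = d + 1 + m := by omega
    simp only [if_pos hcond]
    have hsplit : ∀ v : Fin (8 * d + 8) → ℝ,
        ∑ j : Fin (8 * d + 8),
          ((if (j : ℕ) = m then (1:ℝ) else 0)
            + (if (j : ℕ) = d + m then -1 else 0)
            + (if (j : ℕ) = 2 * d + m then -1 else 0)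
            + (if (j : ℕ) = 3 * d + m then 1 else 0)) * v j
        = 1 * v ⟨m, by omega⟩ + (-1) * v ⟨d + m, by omega⟩
          + (-1) * v ⟨2 * d + m, by omega⟩ + 1 * v ⟨3 * d + m, by omega⟩ := by
      intro v
      simp only [add_mul, Finset.sum_add_distrib]
      rw [sum_ind m (by omega), sum_ind (d + m) (by omega),
        sum_ind (2 * d + m) (by omega), sum_ind (3 * d + m) (by omega)]
    rw [hsplit]
    have c0 : m < 2 * d := by omega
    have c1 : m < d := hmd
    have c2 : ¬ (d + m < d) := by omega
    have c3 : d + m < 2 * d := by omega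
    have c4 : ¬ (2 * d + m < d) := by omega
    have c5 : ¬ (2 * d + m < 2 * d) := by omega
    have c6 : 2 * d + m < 3 * d := by omega
    have c7 : ¬ (3 * d + m < d) := by omega
    have c8 : ¬ (3 * d + m < 2 * d) := by omega
    have c9 : ¬ (3 * d + m < 3 * d) := by omega
    have c10 : 3 * d + m < 4 * d := by omega
    have s1 : d + m - d = m := by omega
    have s2 : 2 * d + m - 2 * d = m := by omega
    have s3 : 3 * d + m - 3 * d = m := by omega
    simp only [c0, c1, c2, c3, c4, c5, c6, c7, c8, c9, c10, s1, s2, s3,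
      if_true, if_false]
    rw [sum_ind (d + 1 + m) (by omega) 1 h, sum_ind (d + 1 + m) (by omega) (-1) h]
    have hidx : i = ⟨d + 1 + m, by omega⟩ := Fin.ext hiv
    have hh : h ⟨d + 1 + m, by omega⟩ = h i := congrArg h hidx.symm
    rw [hh, show (1:ℝ) * h i + -θ = h i - θ by ring,
      show (-1:ℝ) * h i + -θ = -(h i) - θ by ring,
      show (1:ℝ) * h i + 0 = h i by ring,
      show (-1:ℝ) * h i + 0 = -(h i) by ring]
    linear_combination soft_key θ (h i) hθ
  · rw [if_neg hcond]
    simp only [if_neg hcond, zero_mul, Finset.sum_const_zero, add_zero]
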